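/- Bound link names in HyperLMNtal graphs are α-convertible: for any graph G and link names X, Y with Y not occurring free in G, νX.G is structurally congruent to νY.(G⟨Y/X⟩). -/

import Mathlib

/-- Atom names: either the fusion atom `⋈` or an ordinary constructor name. -/
inductive AName where
  | fuse
  | ctor (s : String)
deriving DecidableEq

/-- HyperLMNtal graphs: `0`, atoms `p(X̄)`, molecules `(G,G)`, hyperlink creation `νX.G`. -/
inductive HLGraph where
  | zero
  | atom (p : AName) (xs : List ℕ)
  | mol (g₁ g₂ : HLGraph)
  | nu (x : ℕ) (g : HLGraph)
deriving DecidableEq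

namespace HLGraph

/-- The fusion atom `X ⋈ Y`. -/
def fuseG (x y : ℕ) : HLGraph := .atom .fuse [x, y]

/-- Free link names. -/
def fn : HLGraph → Finset ℕ
  | .zero => ∅
  | .atom _ xs => xs.toFinset
  | .mol g₁ g₂ => g₁.fn ∪ g₂.fn
  | .nu x g => g.fn.erase x

/-- Capture-avoiding link substitution: `LSubst g x y g'` means `g⟨y/x⟩ = g'`
(all free occurrences of `x` replaced by `y`). -/
inductive LSubst : HLGraph → ℕ → ℕ → HLGraph → Prop where
  | zero : LSubst .zero x y .zero
  | atom : LSubst (.atom p xs) x y (.atom p (xs.map fun z => if z = x then y else z))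
  | mol : LSubst g₁ x y g₁' → LSubst g₂ x y g₂' →
      LSubst (.mol g₁ g₂) x y (.mol g₁' g₂')
  | nuEq : LSubst (.nu x g) x y (.nu x g)
  | nuNe : z ≠ x → z ≠ y → LSubst g x y g' →
      LSubst (.nu z g) x y (.nu z g')
  | nuCap : y ≠ x → w ∉ g.fn → w ≠ y →
      LSubst g y w g₁ → LSubst g₁ x y g₂ →
      LSubst (.nu y g) x y (.nu w g₂)

/-- Structural congruence `≡` generated by (E1)–(E10). -/
inductive Cong : HLGraph → HLGraph → Prop where
  | refl : Cong g g
  | symm : Cong g₁ g₂ → Cong g₂ g₁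
  | trans : Cong g₁ g₂ → Cong g₂ g₃ → Cong g₁ g₃
  | e1 : Cong (.mol .zero g) g
  | e2 : Cong (.mol g₁ g₂) (.mol g₂ g₁)
  | e3 : Cong (.mol g₁ (.mol g₂ g₃)) (.mol (.mol g₁ g₂) g₃)
  | e4 : Cong g₁ g₂ → Cong (.mol g₁ g₃) (.mol g₂ g₃)
  | e5 : Cong g₁ g₂ → Cong (.nu x g₁) (.nu x g₂)
  | e6 : x ∈ g.fn ∨ y ∈ g.fn → LSubst g x y g' →
      Cong (.nu x (.mol (fuseG x y) g)) (.nu x g')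
  | e7 : Cong (.nu x (.nu y (fuseG x y))) .zero
  | e8 : Cong (.nu x .zero) .zero
  | e9 : Cong (.nu x (.nu y g)) (.nu y (.nu x g))
  | e10 : x ∉ g₂.fn → Cong (.nu x (.mol g₁ g₂)) (.mol (.nu x g₁) g₂)

end HLGraph

/-- A rewrite rule `lhs ⊸ rhs`. -/
structure GRule where
  lhs : HLGraph
  rhs : HLGraph

/-- The one-step reduction relation `⇝_P` (rules (R1)–(R4)). -/
inductive Red (P : Set GRule) : HLGraph → HLGraph → Prop where
  | r1 : Red P g₁ g₂ → Red P (.mol g₁ g₃) (.mol g₂ g₃)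
  | r2 : Red P g₁ g₂ → Red P (.nu x g₁) (.nu x g₂)
  | r3 : HLGraph.Cong g₁ g₂ → Red P g₂ g₃ → HLGraph.Cong g₃ g₄ → Red P g₁ g₄
  | r4 : r ∈ P → Red P r.lhs r.rhs

namespace HLGraph

/-- An auxiliary size measure on graphs. -/
def gsize : HLGraph → ℕ
  | .zero => 1
  | .atom _ _ => 1
  | .mol a b => gsize a + gsize b + 1
  | .nu _ g => gsize g + 1

lemma LSubst.gsize_eq {g : HLGraph} {x y : ℕ} {g' : HLGraph} (h : LSubst g x y g') :
    gsize g' = gsize g := by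
  induction h <;> simp [gsize, *]

/-- Free names of the result of a substitution. -/
lemma LSubst.fn_sub {g : HLGraph} {x y : ℕ} {g' : HLGraph} (h : LSubst g x y g') :
    ∀ a ∈ g'.fn, a = y ∨ (a ∈ g.fn ∧ a ≠ x) := by
  induction h with
  | zero => intro a ha; simp [fn] at ha
  | @atom p xs x' y' =>
      intro a ha
      simp only [fn, List.mem_toFinset, List.mem_map] at ha
      obtain ⟨z, hz, hza⟩ := ha
      by_cases hzx : z = x'
      · left; rw [← hza]; simp [hzx]
      · right
        rw [← hza]
        simp only [if_neg hzx]
        exact ⟨by simp [fn, List.mem_toFinset, hz], hzx⟩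
  | mol h1 h2 ih1 ih2 =>
      intro a ha
      simp only [fn, Finset.mem_union] at ha ⊢
      rcases ha with ha | ha
      · rcases ih1 a ha with h' | ⟨h1', h2'⟩
        · exact Or.inl h'
        · exact Or.inr ⟨Or.inl h1', h2'⟩
      · rcases ih2 a ha with h' | ⟨h1', h2'⟩
        · exact Or.inl h'
        · exact Or.inr ⟨Or.inr h1', h2'⟩
  | nuEq =>
      intro a ha
      simp only [fn, Finset.mem_erase] at ha
      exact Or.inr ⟨by simp [fn, Finset.mem_erase]; exact ⟨ha.1, ha.2⟩, ha.1⟩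
  | nuNe hzx hzy hsub ih =>
      intro a ha
      simp only [fn, Finset.mem_erase] at ha
      rcases ih a ha.2 with h' | ⟨h1', h2'⟩
      · exact Or.inl h'
      · exact Or.inr ⟨by simp [fn, Finset.mem_erase]; exact ⟨ha.1, h1'⟩, h2'⟩
  | nuCap hyx hw hwy h1 h2 ih1 ih2 =>
      intro a ha
      simp only [fn, Finset.mem_erase] at ha
      rcases ih2 a ha.2 with h' | ⟨h1', h2'⟩
      · exact Or.inl h'
      · rcases ih1 a h1' with h'' | ⟨h1'', h2''⟩
        · exact absurd h'' ha.1
        · exact Or.inr ⟨by simp [fn, Finset.mem_erase]; exact ⟨h2'', h1''⟩, h2'⟩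

lemma LSubst.x_notin {g : HLGraph} {x y : ℕ} {g' : HLGraph} (h : LSubst g x y g')
    (hxy : x ≠ y) : x ∉ g'.fn := by
  intro hc
  rcases h.fn_sub x hc with h1 | ⟨_, h2⟩
  · exact hxy h1
  · exact h2 rfl

lemma LSubst.eq_of_eq {g : HLGraph} {x y : ℕ} {g' : HLGraph} (h : LSubst g x y g') :
    x = y → g' = g := by
  induction h with
  | zero => intro _; rfl
  | @atom p xs x' y' =>
      intro hxy
      subst hxy
      congr 1
      have h' : ∀ z ∈ xs, (if z = x' then x' else z) = id z := by
        intro z _; simp only [id]; split <;> simp_all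
      rw [List.map_congr_left h', List.map_id]
  | mol _ _ ih1 ih2 => intro hxy; rw [ih1 hxy, ih2 hxy]
  | nuEq => intro _; rfl
  | nuNe _ _ _ ih => intro hxy; rw [ih hxy]
  | nuCap hyx _ _ _ _ _ _ => intro hxy; exact absurd hxy.symm hyx

/-- A fresh name not in a given finite set. -/
def freshL (s : Finset ℕ) : ℕ := s.sup id + 1

lemma freshL_not_mem (s : Finset ℕ) : freshL s ∉ s := by
  intro h
  have := Finset.le_sup (f := id) h
  simp only [id] at this
  simp only [freshL] at this
  omega

/-- Totality of substitution. -/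
lemma lsubst_total : ∀ (n : ℕ) (g : HLGraph), gsize g ≤ n → ∀ x y, ∃ g', LSubst g x y g' := by
  intro n
  induction n with
  | zero => intro g hg; cases g <;> simp [gsize] at hg
  | succ n IH =>
      intro g hg x y
      cases g with
      | zero => exact ⟨_, .zero⟩
      | atom p xs => exact ⟨_, .atom⟩
      | mol a b =>
          simp only [gsize] at hg
          obtain ⟨a', ha⟩ := IH a (by omega) x y
          obtain ⟨b', hb⟩ := IH b (by omega) x y
          exact ⟨_, .mol ha hb⟩
      | nu z h =>
          simp only [gsize] at hg
          by_cases hzx : z = x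
          · subst hzx; exact ⟨_, .nuEq⟩
          · by_cases hzy : z = y
            · subst hzy
              have hwm := freshL_not_mem (h.fn ∪ {z})
              set w := freshL (h.fn ∪ {z}) with hwdef
              have hwf : w ∉ h.fn := fun hc => hwm (Finset.mem_union_left _ hc)
              have hwz : w ≠ z := fun hc =>
                hwm (Finset.mem_union_right _ (Finset.mem_singleton.mpr hc))
              obtain ⟨h₁, hh₁⟩ := IH h (by omega) z w
              obtain ⟨h₂, hh₂⟩ := IH h₁ (by rw [hh₁.gsize_eq]; omega) x z
              exact ⟨_, .nuCap hzx hwf hwz hh₁ hh₂⟩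
            · obtain ⟨h', hh⟩ := IH h (by omega) x y
              exact ⟨_, .nuNe hzx hzy hh⟩

/-- A vacuous `ν` can be removed. -/
lemma nu_unused {x : ℕ} {g : HLGraph} (h : x ∉ g.fn) : Cong (.nu x g) g :=
  (Cong.e5 Cong.e1.symm).trans ((Cong.e10 h).trans ((Cong.e4 Cong.e8).trans Cong.e1))

/-- Full congruence for molecules. -/
lemma molCong {a a' b b' : HLGraph} (h1 : Cong a a') (h2 : Cong b b') :
    Cong (.mol a b) (.mol a' b') :=
  (Cong.e4 h1).trans (Cong.e2.trans ((Cong.e4 h2).trans Cong.e2))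

/-- Symmetry of fusion. -/
lemma fuse_comm (a b : ℕ) : Cong (fuseG a b) (fuseG b a) := by
  have hzm := freshL_not_mem {a, b}
  set z := freshL {a, b} with hzdef
  have hza : z ≠ a := fun h => hzm (by simp [h])
  have hzb : z ≠ b := fun h => hzm (by simp [h])
  have key : ∀ u v : ℕ, z ≠ u → z ≠ v →
      Cong (.nu z (.mol (fuseG z u) (fuseG z v))) (fuseG u v) := by
    intro u v hzu hzv
    have hs : LSubst (fuseG z v) z u (fuseG u v) := by
      have hmap : [z, v].map (fun w => if w = z then u else w) = [u, v] := by
        simp [Ne.symm hzv]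
      have := LSubst.atom (p := AName.fuse) (xs := [z, v]) (x := z) (y := u)
      rwa [hmap] at this
    have cond : z ∈ (fuseG z v).fn := by simp [fuseG, fn]
    refine (Cong.e6 (Or.inl cond) hs).trans (nu_unused ?_)
    simp [fuseG, fn, hzu, hzv]
  exact (key a b hza hzb).symm.trans ((Cong.e5 Cong.e2).trans (key b a hzb hza))

/-- Master lemma, by strong induction on size:
(Q) a "nice" substitution of a non-free name is congruent to the original graph, and
(A) α-convertibility. -/
lemma master : ∀ n : ℕ,
    (∀ g, gsize g ≤ n → ∀ x y, x ∉ g.fn → x ≠ y → ∃ h, LSubst g x y h ∧ Cong g h) ∧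
    (∀ g, gsize g ≤ n → ∀ x y g', y ∉ g.fn → LSubst g x y g' → Cong (.nu x g) (.nu y g')) := by
  intro n
  induction n using Nat.strong_induction_on with
  | _ n IH =>
  have hQ : ∀ g, gsize g ≤ n → ∀ x y, x ∉ g.fn → x ≠ y →
      ∃ h, LSubst g x y h ∧ Cong g h := by
    intro g hg x y hx hxy
    cases g with
    | zero => exact ⟨.zero, .zero, .refl⟩
    | atom p xs =>
        have hxs : x ∉ xs := by simpa [fn] using hx
        have hmap : xs.map (fun z => if z = x then y else z) = xs := by
          have h' : ∀ z ∈ xs, (if z = x then y else z) = id z := by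
            intro z hz
            simp only [id]
            exact if_neg (fun h => hxs (by rw [← h]; exact hz))
          rw [List.map_congr_left h', List.map_id]
        refine ⟨.atom p xs, ?_, .refl⟩
        have := LSubst.atom (p := p) (xs := xs) (x := x) (y := y)
        rwa [hmap] at this
    | mol a b =>
        have hga : gsize a < n := by simp only [gsize] at hg; omega
        have hgb : gsize b < n := by simp only [gsize] at hg; omega
        have hx' : x ∉ a.fn ∧ x ∉ b.fn := by
          constructor <;> intro hc <;> exact hx (by simp [fn, hc])
        obtain ⟨a', sa, ca⟩ := (IH (gsize a) hga).1 a le_rfl x y hx'.1 hxy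
        obtain ⟨b', sb, cb⟩ := (IH (gsize b) hgb).1 b le_rfl x y hx'.2 hxy
        exact ⟨.mol a' b', .mol sa sb, molCong ca cb⟩
    | nu z h =>
        have hsz : gsize h < n := by simp only [gsize] at hg; omega
        by_cases hzx : z = x
        · subst hzx; exact ⟨_, .nuEq, .refl⟩
        · by_cases hzy : z = y
          · subst hzy
            have hwm := freshL_not_mem (h.fn ∪ {x, z})
            set w := freshL (h.fn ∪ {x, z}) with hwdef
            have hwf : w ∉ h.fn := fun hc => hwm (by simp [hc])
            have hwx : w ≠ x := fun hc => hwm (by simp [hc])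
            have hwz : w ≠ z := fun hc => hwm (by simp [hc])
            obtain ⟨h₁, s₁⟩ := lsubst_total (gsize h) h le_rfl z w
            have cA : Cong (.nu z h) (.nu w h₁) :=
              (IH (gsize h) hsz).2 h le_rfl z w h₁ hwf s₁
            have hxh : x ∉ h.fn := fun hc =>
              hx (Finset.mem_erase.mpr ⟨hxy, hc⟩)
            have hxh₁ : x ∉ h₁.fn := by
              intro hc
              rcases s₁.fn_sub x hc with h' | ⟨h', _⟩
              · exact hwx h'.symm
              · exact hxh h'
            obtain ⟨h₂, s₂, c₂⟩ :=
              (IH (gsize h) hsz).1 h₁ (le_of_eq s₁.gsize_eq) x z hxh₁ hxy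
            exact ⟨.nu w h₂, .nuCap hzx hwf hwz s₁ s₂, cA.trans (Cong.e5 c₂)⟩
          · have hxh : x ∉ h.fn := fun hc =>
              hx (Finset.mem_erase.mpr ⟨fun he => hzx he.symm, hc⟩)
            obtain ⟨h', s', c'⟩ := (IH (gsize h) hsz).1 h le_rfl x y hxh hxy
            exact ⟨.nu z h', .nuNe hzx hzy s', Cong.e5 c'⟩
  refine ⟨hQ, ?_⟩
  intro g hg x y g' hy hs
  by_cases hxy : x = y
  · subst hxy
    rw [hs.eq_of_eq rfl]
    exact .refl
  · by_cases hxg : x ∈ g.fn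
    · -- main α-renaming chain via a fusion
      obtain ⟨h, sh, ch⟩ := hQ g hg y x hy (Ne.symm hxy)
      have hyh : y ∉ h.fn := by
        intro hc
        rcases sh.fn_sub y hc with h' | ⟨h1', _⟩
        · exact hxy h'.symm
        · exact hy h1'
      have hxg' : x ∉ g'.fn := hs.x_notin hxy
      have L : Cong (.nu y (.mol (fuseG y x) g)) g :=
        (Cong.e6 (Or.inr hxg) sh).trans ((nu_unused hyh).trans ch.symm)
      exact (Cong.e5 L.symm).trans <| Cong.e9.trans <|
        (Cong.e5 (Cong.e5 (Cong.e4 (fuse_comm y x)))).trans <|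
        (Cong.e5 (Cong.e6 (Or.inl hxg) hs)).trans <|
        Cong.e5 (nu_unused hxg')
    · -- x not free in g
      obtain ⟨g₀, s₀, c₀⟩ := hQ g hg x y hxg hxy
      have hxg' : x ∉ g'.fn := hs.x_notin hxy
      have hxg₀ : x ∉ g₀.fn := s₀.x_notin hxy
      have hzm := freshL_not_mem (g'.fn ∪ g₀.fn ∪ {x, y})
      set z := freshL (g'.fn ∪ g₀.fn ∪ {x, y}) with hzdef
      have hz1 : z ∉ g'.fn := fun hc => hzm (by simp [hc])
      have hz0 : z ∉ g₀.fn := fun hc => hzm (by simp [hc])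
      have hzx : z ≠ x := fun hc => hzm (by simp [hc])
      have hzy : z ≠ y := fun hc => hzm (by simp [hc])
      have fsub : LSubst (fuseG x z) x y (fuseG y z) := by
        have hmap : [x, z].map (fun w => if w = x then y else w) = [y, z] := by
          simp [hzx]
        have := LSubst.atom (p := AName.fuse) (xs := [x, z]) (x := x) (y := y)
        rwa [hmap] at this
      have cond : x ∈ (HLGraph.mol g (fuseG x z)).fn := by simp [fn, fuseG]
      have E1 : Cong (.nu x (.mol (fuseG x y) (.mol g (fuseG x z))))
          (.nu x (.mol g' (fuseG y z))) :=
        Cong.e6 (Or.inl cond) (.mol hs fsub)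
      have E0 : Cong (.nu x (.mol (fuseG x y) (.mol g (fuseG x z))))
          (.nu x (.mol g₀ (fuseG y z))) :=
        Cong.e6 (Or.inl cond) (.mol s₀ fsub)
      have hxR1 : x ∉ (HLGraph.mol g' (fuseG y z)).fn := by
        simp only [fn, fuseG, Finset.mem_union, List.mem_toFinset, List.mem_cons,
          List.mem_singleton, List.not_mem_nil, or_false]
        push_neg
        exact ⟨hxg', hxy, fun h => hzx h.symm⟩
      have hxR0 : x ∉ (HLGraph.mol g₀ (fuseG y z)).fn := by
        simp only [fn, fuseG, Finset.mem_union, List.mem_toFinset, List.mem_cons,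
          List.mem_singleton, List.not_mem_nil, or_false]
        push_neg
        exact ⟨hxg₀, hxy, fun h => hzx h.symm⟩
      have Rcong : Cong (.mol g' (fuseG y z)) (.mol g₀ (fuseG y z)) :=
        (nu_unused hxR1).symm.trans ((E1.symm.trans E0).trans (nu_unused hxR0))
      have cancel : ∀ M, gsize M ≤ n → z ∉ M.fn →
          Cong (.nu y (.nu z (.mol (fuseG z y) M))) (.nu y M) := by
        intro M hM hzM
        by_cases hyM : y ∈ M.fn
        · obtain ⟨h', s', c'⟩ := hQ M hM z y hzM hzy
          have hzh' : z ∉ h'.fn := s'.x_notin hzy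
          exact Cong.e5 ((Cong.e6 (Or.inr hyM) s').trans
            ((nu_unused hzh').trans c'.symm))
        · exact (Cong.e5 (Cong.e10 hzM)).trans <|
            (Cong.e10 hyM).trans <|
            (Cong.e4 ((Cong.e5 (Cong.e5 (fuse_comm z y))).trans Cong.e7)).trans <|
            Cong.e1.trans (nu_unused hyM).symm
      have hgsz' : gsize g' ≤ n := by rw [hs.gsize_eq]; exact hg
      have hgsz₀ : gsize g₀ ≤ n := by rw [s₀.gsize_eq]; exact hg
      have molpart : Cong (.mol (fuseG z y) g₀) (.mol (fuseG z y) g') :=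
        Cong.e2.trans ((molCong Cong.refl (fuse_comm z y)).trans
          (Rcong.symm.trans (Cong.e2.trans (Cong.e4 (fuse_comm y z)))))
      exact (nu_unused hxg).trans <| (nu_unused hy).symm.trans <|
        (Cong.e5 c₀).trans <| (cancel g₀ hgsz₀ hz0).symm.trans <|
        (Cong.e5 (Cong.e5 molpart)).trans (cancel g' hgsz' hz1)

end HLGraph

/-- α-convertibility of bound links: if `Y ∉ fn(G)` then `νX.G ≡ νY.(G⟨Y/X⟩)`. -/
theorem alpha_conv (g g' : HLGraph) (x y : ℕ) (hy : y ∉ g.fn)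
    (hs : HLGraph.LSubst g x y g') : HLGraph.Cong (.nu x g) (.nu y g') :=
  (HLGraph.master (HLGraph.gsize g)).2 g le_rfl x y g' hy hs
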